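/- Let p ≥ 2 and q = p/(p-1). For all real numbers x, y one has |x+y|^q + |x−y|^q ≥ 2(|x|^p + |y|^p)^(q-1) (scalar Clarkson inequality (1.1)). -/

import Mathlib

open Real Set

namespace Clarkson

lemma bern_up {z α : ℝ} (hz : -1 ≤ z) (h0 : 0 ≤ α) (h1 : α ≤ 1) : (1+z)^α ≤ 1 + α*z :=
  rpow_one_add_le_one_add_mul_self hz h0 h1

lemma bern_low {z α : ℝ} (hz : -1 ≤ z) (hα : 1 ≤ α) : 1 + α*z ≤ (1+z)^α :=
  one_add_mul_self_le_rpow_one_add hz hα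

lemma nonneg_of_deriv {c : ℝ} (hc : 0 < c) (f f' : ℝ → ℝ)
    (hd : ∀ t ∈ Icc (0:ℝ) c, HasDerivAt f (f' t) t)
    (h0 : f 0 = 0) (hf' : ∀ t ∈ Ioo (0:ℝ) c, 0 ≤ f' t) : 0 ≤ f c := by
  have hmono : MonotoneOn f (Icc 0 c) := by
    apply monotoneOn_of_deriv_nonneg (convex_Icc _ _)
    · exact fun t ht => (hd t ht).continuousAt.continuousWithinAt
    · intro t ht
      rw [interior_Icc] at ht
      exact ((hd t (Ioo_subset_Icc_self ht)).differentiableAt).differentiableWithinAt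
    · intro t ht
      rw [interior_Icc] at ht
      rw [(hd t (Ioo_subset_Icc_self ht)).deriv]
      exact hf' t ht
  have h2 := hmono (left_mem_Icc.mpr hc.le) (right_mem_Icc.mpr hc.le) hc.le
  rw [h0] at h2
  exact h2

-- derivative of t ↦ (1+t)^r
lemma hd_plus (r t : ℝ) (h : 0 < 1 + t) :
    HasDerivAt (fun u : ℝ => (1+u)^r) (r*(1+t)^(r-1)) t := by
  have h1 : HasDerivAt (fun u : ℝ => 1+u) 1 t := by
    simpa using (hasDerivAt_id t).const_add (1:ℝ)
  have h2 := Real.hasDerivAt_rpow_const (x := 1+t) (p := r) (Or.inl h.ne')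
  exact (h2.comp t h1).congr_deriv (by ring)

lemma hd_minus (r t : ℝ) (h : 0 < 1 - t) :
    HasDerivAt (fun u : ℝ => (1-u)^r) (-(r*(1-t)^(r-1))) t := by
  have h1 : HasDerivAt (fun u : ℝ => 1-u) (-1) t := by
    simpa using (hasDerivAt_id t).const_sub (1:ℝ)
  have h2 := Real.hasDerivAt_rpow_const (x := 1-t) (p := r) (Or.inl h.ne')
  have := h2.comp t h1
  exact this.congr_deriv (by ring)


/-- L1 : for 1 < q ≤ 2, 0 ≤ c < 1 :  2 + q(q-1)c² ≤ (1+c)^q + (1-c)^q -/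
lemma L1 {q : ℝ} (hq1 : 1 < q) (hq2 : q ≤ 2) {c : ℝ} (h0 : 0 ≤ c) (h1 : c < 1) :
    2 + q*(q-1)*c^2 ≤ (1+c)^q + (1-c)^q := by
  rcases eq_or_lt_of_le h0 with rfl | h0
  · norm_num
  set F' : ℝ → ℝ := fun t => q*(1+t)^(q-1) - q*(1-t)^(q-1) - 2*q*(q-1)*t with hF'
  -- step 1 : F' ≥ 0 on [0, c]
  have hF'nonneg : ∀ t, 0 ≤ t → t < 1 → 0 ≤ F' t := by
    intro t ht0 ht1
    rcases eq_or_lt_of_le ht0 with rfl | ht0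
    · simp [hF']
    apply nonneg_of_deriv ht0 F'
        (fun u => q*(q-1)*(1+u)^(q-2) + q*(q-1)*(1-u)^(q-2) - 2*q*(q-1))
    · intro u hu
      have hu1 : 0 < 1 + u := by cases hu; linarith
      have hu2 : 0 < 1 - u := by cases hu; linarith
      have hA := (hd_plus (q-1) u hu1).const_mul q
      have hB := (hd_minus (q-1) u hu2).const_mul q
      have hC : HasDerivAt (fun v : ℝ => 2*q*(q-1)*v) (2*q*(q-1)) u := by
        simpa using (hasDerivAt_id u).const_mul (2*q*(q-1))
      have := (hA.sub hB).sub hC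
      refine this.congr_deriv ?_
      ring_nf
    · simp [hF', Real.one_rpow]
    · intro u hu
      obtain ⟨hu0, huc⟩ := hu
      have hu1 : 0 < 1 + u := by linarith
      have hu2 : 0 < 1 - u := by linarith
      have hXY : 1 ≤ (1+u)^(q-2) * (1-u)^(q-2) := by
        rw [← Real.mul_rpow hu1.le hu2.le]
        have hb0 : 0 < (1+u)*(1-u) := mul_pos hu1 hu2
        have hb1 : (1+u)*(1-u) ≤ 1 := by nlinarith
        calc (1:ℝ) = ((1+u)*(1-u))^(0:ℝ) := by rw [Real.rpow_zero]
        _ ≤ ((1+u)*(1-u))^(q-2) := Real.rpow_le_rpow_of_exponent_ge hb0 hb1 (by linarith)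
      have hX : 0 < (1+u)^(q-2) := Real.rpow_pos_of_pos hu1 _
      have hY : 0 < (1-u)^(q-2) := Real.rpow_pos_of_pos hu2 _
      have h2 : 2 ≤ (1+u)^(q-2) + (1-u)^(q-2) := by
        nlinarith [sq_nonneg ((1+u)^(q-2) - (1-u)^(q-2)), sq_nonneg ((1+u)^(q-2) + (1-u)^(q-2) - 2)]
      have hq0 : 0 ≤ q*(q-1) := by nlinarith
      nlinarith
  -- step 2 : conclude
  have key := nonneg_of_deriv h0 (fun t => (1+t)^q + (1-t)^q - (2 + q*(q-1)*t^2)) F'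
  have := key ?_ ?_ ?_
  · linarith
  · intro t ht
    obtain ⟨ht0, htc⟩ := ht
    have hu1 : 0 < 1 + t := by linarith
    have hu2 : 0 < 1 - t := by linarith
    have hA := hd_plus q t hu1
    have hB := hd_minus q t hu2
    have hC : HasDerivAt (fun v : ℝ => 2 + q*(q-1)*v^2) (q*(q-1)*(2*t)) t := by
      have := ((hasDerivAt_pow 2 t).const_mul (q*(q-1))).const_add 2
      simpa using this
    have := (hA.add hB).sub hC
    refine this.congr_deriv ?_
    simp [hF']; ring
  · norm_num
  · intro t ht
    exact hF'nonneg t ht.1.le (lt_trans ht.2 h1)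

/-- L2 : upper bound for (1+s)^p + (1-s)^p on [0, s₀] -/
lemma L2 {p : ℝ} (hp : 2 ≤ p) {s₀ K : ℝ} (hs₀ : 0 < s₀) (hs₁ : s₀ < 1)
    (hK : ∀ u, 0 ≤ u → u ≤ s₀ → (1+u)^(p-2) + (1-u)^(p-2) ≤ 2*K)
    {s : ℝ} (h0 : 0 ≤ s) (hs : s ≤ s₀) :
    (1+s)^p + (1-s)^p ≤ 2 + p*(p-1)*K*s^2 := by
  rcases eq_or_lt_of_le h0 with rfl | h0
  · norm_num
  set F' : ℝ → ℝ := fun t => 2*p*(p-1)*K*t - p*(1+t)^(p-1) + p*(1-t)^(p-1) with hF'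
  have hF'nonneg : ∀ t, 0 ≤ t → t ≤ s₀ → 0 ≤ F' t := by
    intro t ht0 ht1
    rcases eq_or_lt_of_le ht0 with rfl | ht0
    · simp [hF']
    apply nonneg_of_deriv ht0 F'
        (fun u => 2*p*(p-1)*K - p*(p-1)*(1+u)^(p-2) - p*(p-1)*(1-u)^(p-2))
    · intro u hu
      obtain ⟨hu0, huc⟩ := hu
      have hu1 : 0 < 1 + u := by linarith
      have hu2 : 0 < 1 - u := by linarith
      have hA := (hd_plus (p-1) u hu1).const_mul p
      have hB := (hd_minus (p-1) u hu2).const_mul p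
      have hC : HasDerivAt (fun v : ℝ => 2*p*(p-1)*K*v) (2*p*(p-1)*K) u := by
        simpa using (hasDerivAt_id u).const_mul (2*p*(p-1)*K)
      have := (hC.sub hA).add hB
      refine this.congr_deriv ?_
      ring_nf
    · simp [hF']
    · intro u hu
      obtain ⟨hu0, huc⟩ := hu
      have hb := hK u hu0.le (le_of_lt (lt_of_lt_of_le huc ht1))
      have hpp : 0 ≤ p*(p-1) := by nlinarith
      nlinarith
  have key := nonneg_of_deriv h0 (fun t => 2 + p*(p-1)*K*t^2 - ((1+t)^p + (1-t)^p)) F'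
  have := key ?_ ?_ ?_
  · linarith
  · intro t ht
    obtain ⟨ht0, htc⟩ := ht
    have hu1 : 0 < 1 + t := by linarith
    have hu2 : 0 < 1 - t := by linarith [le_trans htc hs, hs₁]
    have hA := hd_plus p t hu1
    have hB := hd_minus p t hu2
    have hC : HasDerivAt (fun v : ℝ => 2 + p*(p-1)*K*v^2) (p*(p-1)*K*(2*t)) t := by
      have := ((hasDerivAt_pow 2 t).const_mul (p*(p-1)*K)).const_add 2
      simpa using this
    have := hC.sub (hA.add hB)
    refine this.congr_deriv ?_
    simp [hF']; ring
  · norm_num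
  · intro t ht
    exact hF'nonneg t ht.1.le (le_of_lt (lt_of_lt_of_le ht.2 hs))

noncomputable def s0 (p : ℝ) : ℝ := (p+1)/(2*p^2+p+1)

lemma s0_pos {p : ℝ} (hp : 2 ≤ p) : 0 < s0 p := by
  have h : 0 < p := by linarith
  unfold s0; positivity

lemma s0_le {p : ℝ} (hp : 2 ≤ p) : s0 p ≤ 3/(4*p) := by
  unfold s0
  rw [div_le_div_iff₀ (by nlinarith) (by linarith)]
  nlinarith

lemma s0_lt_one {p : ℝ} (hp : 2 ≤ p) : s0 p < 1 := by
  have := s0_le hp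
  have : 3/(4*p) ≤ 3/8 := by
    apply div_le_div_of_nonneg_left (by norm_num) (by norm_num) (by linarith)
  linarith [s0_le hp]

lemma log43 : (0.2679:ℝ) ≤ Real.log (4/3) := by
  set z := Real.sqrt (4/3) with hz
  have hz2 : z^2 = 4/3 := Real.sq_sqrt (by norm_num)
  have hz0 : (1.1547:ℝ) ≤ z := by
    rw [hz]
    rw [show (4/3 : ℝ) = (4:ℝ)/3 from rfl]
    have : (1.1547:ℝ) = Real.sqrt (1.1547^2) := (Real.sqrt_sq (by norm_num)).symm
    rw [this]
    exact Real.sqrt_le_sqrt (by norm_num)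
  have hzpos : 0 < z := by linarith
  have hlog : Real.log (4/3) = 2 * Real.log z := by
    rw [hz, Real.log_sqrt (by norm_num)]; ring
  have h1 : Real.log (1/z) ≤ 1/z - 1 := Real.log_le_sub_one_of_pos (by positivity)
  rw [Real.log_div one_ne_zero hzpos.ne', Real.log_one] at h1
  have h2 : 1/z ≤ 0.86603 := by
    rw [div_le_iff₀ hzpos]; nlinarith
  rw [hlog]; nlinarith

lemma log32 : Real.log (3/2) ≤ (0.4272:ℝ) := by
  set w := Real.sqrt (Real.sqrt (3/2)) with hw
  have h32 : (0:ℝ) ≤ 3/2 := by norm_num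
  have hs1 : Real.sqrt (3/2) ≤ 1.2248 := by
    rw [show (1.2248:ℝ) = Real.sqrt (1.2248^2) from (Real.sqrt_sq (by norm_num)).symm]
    exact Real.sqrt_le_sqrt (by norm_num)
  have hw1 : w ≤ 1.1068 := by
    rw [hw, show (1.1068:ℝ) = Real.sqrt (1.1068^2) from (Real.sqrt_sq (by norm_num)).symm]
    exact Real.sqrt_le_sqrt (by nlinarith)
  have hwpos : 0 < w := by
    rw [hw]; positivity
  have hlog : Real.log (3/2) = 4 * Real.log w := by
    rw [hw, Real.log_sqrt (Real.sqrt_nonneg _), Real.log_sqrt h32]; ring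
  have h1 : Real.log w ≤ w - 1 := Real.log_le_sub_one_of_pos hwpos
  rw [hlog]; nlinarith

lemma condA {p : ℝ} (hp : 2 ≤ p) : p * (s0 p)^((p-2)/(p-1)) ≤ 2 := by
  have hp0 : 0 < p := by linarith
  have hp1 : 0 < p - 1 := by linarith
  have hs0 : 0 < s0 p := s0_pos hp
  have hα : 0 ≤ (p-2)/(p-1) := div_nonneg (by linarith) hp1.le
  have hlogs0 : Real.log (s0 p) ≤ Real.log (3/4) - Real.log p := by
    have h1 : s0 p ≤ (3/4)/p := by
      rw [div_div]
      exact s0_le hp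
    calc Real.log (s0 p) ≤ Real.log ((3/4)/p) := Real.log_le_log hs0 h1
    _ = Real.log (3/4) - Real.log p := Real.log_div (by norm_num) hp0.ne'
  have hγ : 0 ≤ Real.log (4/3) := Real.log_nonneg (by norm_num)
  have h34 : Real.log (3/4) = - Real.log (4/3) := by
    rw [show (3/4:ℝ) = (4/3)⁻¹ by norm_num, Real.log_inv]
  have hl2 : (0.6931:ℝ) ≤ Real.log 2 := by linarith [Real.log_two_gt_d9]
  have kp : Real.log p - Real.log 2 ≤ (p-2)*(Real.log 2 + Real.log (4/3)) := by
    have h1 : Real.log (p/2) ≤ p/2 - 1 := Real.log_le_sub_one_of_pos (by positivity)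
    rw [Real.log_div hp0.ne' two_ne_zero] at h1
    nlinarith
  have hlog : Real.log p + (p-2)/(p-1) * Real.log (s0 p) ≤ Real.log 2 := by
    have hmul : (p-2)/(p-1) * Real.log (s0 p) ≤ (p-2)/(p-1) * (Real.log (3/4) - Real.log p) :=
      mul_le_mul_of_nonneg_left hlogs0 hα
    have key2 : (p-1) * (Real.log p + (p-2)/(p-1) * (Real.log (3/4) - Real.log p))
        ≤ (p-1) * Real.log 2 := by
      have expand : (p-1) * ((p-2)/(p-1) * (Real.log (3/4) - Real.log p))
          = (p-2)*(Real.log (3/4) - Real.log p) := by field_simp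
      rw [mul_add, expand, h34]
      linarith [kp]
    have h5 := (mul_le_mul_iff_right₀ hp1).mp key2
    linarith
  calc p * (s0 p)^((p-2)/(p-1)) 
      = Real.exp (Real.log p + (p-2)/(p-1) * Real.log (s0 p)) := by
        rw [Real.exp_add, Real.exp_log hp0, Real.rpow_def_of_pos hs0, mul_comm (Real.log (s0 p))]
  _ ≤ Real.exp (Real.log 2) := Real.exp_le_exp.mpr hlog
  _ = 2 := Real.exp_log two_pos


lemma condB {p : ℝ} (hp3 : 3 ≤ p) :
    p * (1 + s0 p)^(p-2) * (s0 p)^((p-2)/(p-1)) ≤ 2 := by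
  have hp : (2:ℝ) ≤ p := by linarith
  have hp0 : 0 < p := by linarith
  have hp1 : 0 < p - 1 := by linarith
  have hp2 : (0:ℝ) ≤ p - 2 := by linarith
  have hs0 : 0 < s0 p := s0_pos hp
  have hs0' : 0 < 1 + s0 p := by linarith
  have hα : 0 ≤ (p-2)/(p-1) := div_nonneg hp2 hp1.le
  have hl2 : (0.6931:ℝ) ≤ Real.log 2 := by linarith [Real.log_two_gt_d9]
  have hγ : (0.2679:ℝ) ≤ Real.log (4/3) := log43
  have h34 : Real.log (3/4) = - Real.log (4/3) := by
    rw [show (3/4:ℝ) = (4/3)⁻¹ by norm_num, Real.log_inv]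
  have hlogs0 : Real.log (s0 p) ≤ Real.log (3/4) - Real.log p := by
    have h1 : s0 p ≤ (3/4)/p := by rw [div_div]; exact s0_le hp
    calc Real.log (s0 p) ≤ Real.log ((3/4)/p) := Real.log_le_log hs0 h1
    _ = Real.log (3/4) - Real.log p := Real.log_div (by norm_num) hp0.ne'
  -- bound log (p/2)
  have e1 : Real.log p - Real.log 2 ≤ 0.4272 + (p/3 - 1) := by
    have h1 : Real.log (p/3) ≤ p/3 - 1 := Real.log_le_sub_one_of_pos (by positivity)
    rw [Real.log_div hp0.ne' (by norm_num)] at h1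
    have h2 : Real.log (3/2) = Real.log 3 - Real.log 2 := Real.log_div (by norm_num) (by norm_num)
    have h3 := log32
    linarith
  -- bound log (1+s0)
  have e2 : Real.log (1 + s0 p) ≤ (p+1)/(2*p^2+p+1) := by
    have := Real.log_le_sub_one_of_pos hs0'
    have h4 : (1:ℝ) + s0 p - 1 = (p+1)/(2*p^2+p+1) := by unfold s0; ring
    linarith [h4 ▸ this]
  have eL0 : 0 ≤ Real.log (1 + s0 p) := Real.log_nonneg (by linarith)
  -- the rational-polynomial inequality
  have hD : (0:ℝ) < 2*p^2+p+1 := by positivity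
  have e3 : ((p-1)*(p-2)*(p+1))/(2*p^2+p+1) ≤ 0.961*(p-2) - 0.4272 - (p/3 - 1) := by
    rw [div_le_iff₀ hD]
    nlinarith [sq_nonneg (p-3), mul_nonneg (mul_nonneg (sub_nonneg.mpr hp3) (sub_nonneg.mpr hp3)) (sub_nonneg.mpr hp3)]
  -- assemble log inequality
  have hlog : Real.log p + (p-2)*Real.log (1 + s0 p) + (p-2)/(p-1) * Real.log (s0 p)
      ≤ Real.log 2 := by
    have hmul : (p-2)/(p-1) * Real.log (s0 p) ≤ (p-2)/(p-1) * (Real.log (3/4) - Real.log p) :=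
      mul_le_mul_of_nonneg_left hlogs0 hα
    have key2 : (p-1) * (Real.log p + (p-2)*Real.log (1 + s0 p)
        + (p-2)/(p-1) * (Real.log (3/4) - Real.log p)) ≤ (p-1) * Real.log 2 := by
      have expand : (p-1) * ((p-2)/(p-1) * (Real.log (3/4) - Real.log p))
          = (p-2)*(Real.log (3/4) - Real.log p) := by field_simp
      rw [mul_add, mul_add, expand, h34]
      -- goal: (p-1)*log p + (p-1)*((p-2)*L) + (p-2)*(-γ - log p) ≤ (p-1)*log 2
      have e2' : (p-1)*(p-2)*Real.log (1 + s0 p) ≤ (p-1)*(p-2)*((p+1)/(2*p^2+p+1)) :=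
        mul_le_mul_of_nonneg_left e2 (by nlinarith)
      have e3' : (p-1)*(p-2)*((p+1)/(2*p^2+p+1)) ≤ 0.961*(p-2) - 0.4272 - (p/3 - 1) := by
        have : (p-1)*(p-2)*((p+1)/(2*p^2+p+1)) = ((p-1)*(p-2)*(p+1))/(2*p^2+p+1) := by ring
        rw [this]; exact e3
      nlinarith [hγ, hl2, e1, hp2]
    have h5 := (mul_le_mul_iff_right₀ hp1).mp key2
    linarith
  -- exponentiate
  calc p * (1 + s0 p)^(p-2) * (s0 p)^((p-2)/(p-1))
      = Real.exp (Real.log p + (p-2)*Real.log (1 + s0 p) + (p-2)/(p-1) * Real.log (s0 p)) := by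
        rw [Real.exp_add, Real.exp_add, Real.exp_log hp0,
          Real.rpow_def_of_pos hs0, Real.rpow_def_of_pos hs0',
          mul_comm (Real.log (s0 p)), mul_comm (Real.log (1 + s0 p))]
  _ ≤ Real.exp (Real.log 2) := Real.exp_le_exp.mpr hlog
  _ = 2 := Real.exp_log two_pos

lemma keyH {p q : ℝ} (hp : 2 ≤ p) (hq : q = p/(p-1)) {s : ℝ} (h0 : 0 ≤ s) (hs : s ≤ s0 p) :
    (1+s)^p + (1-s)^p ≤ 2*(1+s^q)^(p-1) := by
  have hp0 : 0 < p := by linarith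
  have hp1 : 0 < p - 1 := by linarith
  have hp2 : (0:ℝ) ≤ p - 2 := by linarith
  have hs0 : 0 < s0 p := s0_pos hp
  have hs1 : s0 p < 1 := s0_lt_one hp
  have hq0 : 0 < q := by rw [hq]; positivity
  have h2q : 2 - q = (p-2)/(p-1) := by rw [hq]; field_simp; ring
  have hq2 : q ≤ 2 := by linarith [div_nonneg hp2 hp1.le, h2q]
  rcases eq_or_lt_of_le h0 with rfl | hspos
  · rw [Real.zero_rpow hq0.ne']
    norm_num
  have hsq : (0:ℝ) ≤ s^q := Real.rpow_nonneg h0 _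
  have hBer : 1 + (p-1)*s^q ≤ (1+s^q)^(p-1) := bern_low (by linarith) (by linarith)
  have hsplit : (s:ℝ)^2 = s^q * s^(2-q) := by
    have h1 : s^(q + (2-q)) = s^q * s^(2-q) := Real.rpow_add hspos _ _
    have h2 : q + (2-q) = (2:ℝ) := by ring
    rw [h2] at h1
    rw [← h1, show ((2:ℝ)) = ((2:ℕ):ℝ) by norm_num, Real.rpow_natCast]
  have hmono : s^(2-q) ≤ (s0 p)^(2-q) :=
    Real.rpow_le_rpow h0 hs (by rw [h2q]; positivity)
  -- generic middle step
  have hmid : ∀ K : ℝ, 0 ≤ K → p*K*(s0 p)^(2-q) ≤ 2 → p*(p-1)*K*s^2 ≤ 2*(p-1)*s^q := by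
    intro K hK0 hcond
    calc p*(p-1)*K*s^2 = (p-1)*s^q * (p*(K*s^(2-q))) := by rw [hsplit]; ring
    _ ≤ (p-1)*s^q * (p*(K*(s0 p)^(2-q))) := by
        apply mul_le_mul_of_nonneg_left _ (by positivity)
        apply mul_le_mul_of_nonneg_left _ hp0.le
        exact mul_le_mul_of_nonneg_left hmono hK0
    _ = (p-1)*s^q * (p*K*(s0 p)^(2-q)) := by ring
    _ ≤ (p-1)*s^q * 2 := mul_le_mul_of_nonneg_left hcond (by positivity)
    _ = 2*(p-1)*s^q := by ring
  rcases le_total p 3 with h3 | h3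
  · -- case A : K = 1
    have hL2 := L2 hp hs0 hs1 (K := 1) ?_ h0 hs
    · have hc : p*1*(s0 p)^(2-q) ≤ 2 := by
        rw [mul_one, h2q]; exact condA hp
      have := hmid 1 zero_le_one hc
      linarith
    · intro u hu0 hu1
      have hu2 : u < 1 := lt_of_le_of_lt hu1 hs1
      have b1 : (1+u)^(p-2) ≤ 1+(p-2)*u := bern_up (by linarith) hp2 (by linarith)
      have b2 : (1-u)^(p-2) ≤ 1-(p-2)*u := by
        have h := bern_up (z := -u) (by linarith) hp2 (by linarith)
        rw [show (1:ℝ) + -u = 1 - u by ring] at h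
        linarith [h]
      linarith
  · -- case B : K = (1+s0 p)^(p-2)
    set K := (1 + s0 p)^(p-2) with hK
    have hK1 : (1:ℝ) ≤ K := by
      calc (1:ℝ) = (1:ℝ)^(p-2) := (Real.one_rpow _).symm
      _ ≤ K := Real.rpow_le_rpow (by norm_num) (by linarith) hp2
    have hL2 := L2 hp hs0 hs1 (K := K) ?_ h0 hs
    · have hc : p*K*(s0 p)^(2-q) ≤ 2 := by
        rw [h2q]; exact condB h3
      have := hmid K (by linarith) hc
      linarith
    · intro u hu0 hu1
      have hu2 : u < 1 := lt_of_le_of_lt hu1 hs1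
      have b1 : (1+u)^(p-2) ≤ K := by
        rw [hK]
        exact Real.rpow_le_rpow (by linarith) (by linarith) hp2
      have b2 : (1-u)^(p-2) ≤ 1 := Real.rpow_le_one (by linarith) (by linarith) hp2
      linarith

lemma key {p q : ℝ} (hp : 2 ≤ p) (hq : q = p/(p-1)) {t : ℝ} (h0 : 0 ≤ t) (h1 : t ≤ 1) :
    2*(1+t^p)^(q-1) ≤ (1+t)^q + (1-t)^q := by
  have hp0 : 0 < p := by linarith
  have hp1 : 0 < p - 1 := by linarith
  have hq1 : 1 < q := by
    rw [hq, lt_div_iff₀ hp1]; linarith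
  have hq2 : q ≤ 2 := by
    rw [hq, div_le_iff₀ hp1]; linarith
  rcases le_or_gt t (Real.exp (-(1/p))) with hc | hc
  · -- small t : direct G-estimate
    have ht1 : t < 1 := lt_of_le_of_lt hc (Real.exp_lt_one_iff.mpr
      (by have : 0 < 1/p := by positivity
          linarith))
    have hL1 := L1 hq1 hq2 h0 ht1
    have htp : (0:ℝ) ≤ t^p := Real.rpow_nonneg h0 _
    have hBer : (1+t^p)^(q-1) ≤ 1+(q-1)*t^p := bern_up (by linarith) (by linarith) (by linarith)
    have hstep : 2*((q-1)*t^p) ≤ q*(q-1)*t^2 := by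
      rcases eq_or_lt_of_le h0 with rfl | ht0
      · rw [Real.zero_rpow hp0.ne']; norm_num
      · have e2 : t^(p-2) ≤ q/2 := by
          have m1 : t^(p-2) ≤ (Real.exp (-(1/p)))^(p-2) :=
            Real.rpow_le_rpow h0 hc (by linarith)
          have m2 : (Real.exp (-(1/p)))^(p-2) = Real.exp (-(1/p)*(p-2)) := (Real.exp_mul _ _).symm
          have m3 : 2*(p-1)/p ≤ Real.exp ((p-2)/p) := by
            have hh := Real.add_one_le_exp ((p-2)/p)
            have he : (p-2)/p + 1 = 2*(p-1)/p := by field_simp; ring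
            linarith [he ▸ hh]
          have m4 : Real.exp (-(1/p)*(p-2)) ≤ q/2 := by
            rw [show -(1/p)*(p-2) = -((p-2)/p) by ring, Real.exp_neg]
            have hpos : (0:ℝ) < 2*(p-1)/p := by positivity
            calc (Real.exp ((p-2)/p))⁻¹ ≤ (2*(p-1)/p)⁻¹ := inv_anti₀ hpos m3
            _ = q/2 := by rw [hq, inv_div, div_div]; ring_nf
          linarith [m2 ▸ m1]
        have e1 : t^p = t^2 * t^(p-2) := by
          have hh : t^((2:ℝ)+(p-2)) = t^((2:ℝ)) * t^(p-2) := Real.rpow_add ht0 _ _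
          rw [show ((2:ℝ))+(p-2) = p by ring] at hh
          rw [show ((2:ℝ)) = ((2:ℕ):ℝ) by norm_num, Real.rpow_natCast] at hh
          exact hh
        have hcoef : (0:ℝ) ≤ 2*(q-1)*t^2 := by nlinarith [sq_nonneg t]
        calc 2*((q-1)*t^p) = (2*(q-1)*t^2) * t^(p-2) := by rw [e1]; ring
        _ ≤ (2*(q-1)*t^2) * (q/2) := mul_le_mul_of_nonneg_left e2 hcoef
        _ = q*(q-1)*t^2 := by ring
    linarith [hL1, hBer]
  · -- large t : transform to H
    have ht0 : 0 < t := lt_trans (Real.exp_pos _) hc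
    have h1t : 0 < 1 + t := by linarith
    set s := (1-t)/(1+t) with hs_def
    clear_value s
    have hs0 : 0 ≤ s := by
      rw [hs_def]; exact div_nonneg (by linarith) h1t.le
    have hst : t*(1+s) = 1-s := by rw [hs_def]; field_simp; ring
    have h1s : 0 < 1 + s := by linarith
    have hs_le : s ≤ s0 p := by
      have hs0p : 0 < s0 p := s0_pos hp
      have hexp : Real.exp (1/p) ≤ 1 + 1/p + (1/p)^2 := by
        have habs : |1/p| ≤ 1 := by
          rw [abs_of_nonneg (by positivity), div_le_one hp0]; linarith
        have hb := Real.exp_bound (x := 1/p) habs (n := 2) (by norm_num)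
        have hs2 : ∑ m ∈ Finset.range 2, (1/p)^m/(Nat.factorial m) = 1 + 1/p := by
          simp [Finset.sum_range_succ]
        rw [hs2] at hb
        have h3 := (abs_le.mp hb).2
        have h4 : |1/p| = 1/p := abs_of_nonneg (by positivity)
        rw [h4] at h3
        norm_num [Nat.factorial] at h3
        have h5 : (0:ℝ) ≤ (p^2)⁻¹ := by positivity
        have h6 : ((p:ℝ)⁻¹)^2 = (p^2)⁻¹ := inv_pow p 2
        rw [one_div, h6]
        linarith
      have hid : (1 - s0 p) * (1 + 1/p + (1/p)^2) = 1 + s0 p := by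
        unfold s0; field_simp; ring
      -- exp(-(1/p)) ≥ (1 - s0 p)/(1 + s0 p)
      have hep : 0 < Real.exp (1/p) := Real.exp_pos _
      have hden : 0 < 1 + 1/p + (1/p)^2 := by positivity
      have hid2 : (1 - s0 p)/(1 + s0 p) = 1/(1 + 1/p + (1/p)^2) := by
        rw [div_eq_div_iff (by linarith : (0:ℝ) < 1 + s0 p).ne' hden.ne']
        linear_combination hid
      have hlow : (1 - s0 p)/(1 + s0 p) ≤ Real.exp (-(1/p)) := by
        rw [Real.exp_neg, hid2, one_div]
        exact inv_anti₀ (Real.exp_pos _) hexp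
      -- then s ≤ s0 p
      have ht_ge : (1 - s0 p)/(1 + s0 p) ≤ t := le_of_lt (lt_of_le_of_lt hlow hc)
      have hpos1 : (0:ℝ) < 1 + s0 p := by linarith
      rw [div_le_iff₀ hpos1] at ht_ge
      rw [hs_def, div_le_iff₀ h1t]
      nlinarith
    have hs1 : s < 1 := lt_of_le_of_lt hs_le (s0_lt_one hp)
    have hH := keyH hp hq hs0 hs_le
    -- algebraic transform
    have hpq : p*(q-1) = q := by rw [hq]; field_simp; ring
    have hpq1 : (p-1)*(q-1) = 1 := by rw [hq]; field_simp; ring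
    have e1 : (1:ℝ)+t = 2/(1+s) := by rw [eq_div_iff h1s.ne']; linear_combination hst
    have e2 : (1:ℝ)-t = 2*s/(1+s) := by rw [eq_div_iff h1s.ne']; linear_combination -hst
    have e3 : t = (1-s)/(1+s) := by rw [eq_div_iff h1s.ne']; linear_combination hst
    have hPpos : 0 < (1+s)^p := Real.rpow_pos_of_pos h1s p
    have hQpos : 0 < (1+s)^q := Real.rpow_pos_of_pos h1s q
    set A := (1+s)^p + (1-s)^p with hA
    clear_value A
    have hA0 : (0:ℝ) ≤ A := by
      rw [hA]
      have := Real.rpow_nonneg (by linarith : (0:ℝ) ≤ 1+s) p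
      have := Real.rpow_nonneg (by linarith : (0:ℝ) ≤ 1-s) p
      linarith
    have e4 : 1 + t^p = A/(1+s)^p := by
      rw [hA, e3, Real.div_rpow (by linarith) h1s.le, eq_div_iff hPpos.ne']
      field_simp
    have e5 : (1+t^p)^(q-1) = A^(q-1)/(1+s)^q := by
      rw [e4, Real.div_rpow hA0 hPpos.le, ← Real.rpow_mul h1s.le, hpq]
    have e6 : (1+t)^q = 2^q/(1+s)^q := by
      rw [e1, Real.div_rpow (by norm_num) h1s.le]
    have e7 : (1-t)^q = 2^q*s^q/(1+s)^q := by
      rw [e2, Real.div_rpow (by positivity) h1s.le, Real.mul_rpow (by norm_num) hs0]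
    have hstep : A^(q-1) ≤ 2^(q-1)*(1+s^q) := by
      calc A^(q-1) ≤ (2*(1+s^q)^(p-1))^(q-1) :=
            Real.rpow_le_rpow hA0 hH (by linarith)
      _ = 2^(q-1)*((1+s^q)^(p-1))^(q-1) := by
          rw [Real.mul_rpow (by norm_num) (Real.rpow_nonneg (by positivity) _)]
      _ = 2^(q-1)*(1+s^q) := by
          rw [← Real.rpow_mul (by positivity), hpq1, Real.rpow_one]
    have h2q : (2:ℝ)^q = 2*2^(q-1) := by
      rw [show q = 1 + (q-1) by ring, Real.rpow_add two_pos, Real.rpow_one]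
      ring_nf
    have hsq : (0:ℝ) ≤ s^q := Real.rpow_nonneg hs0 _
    have hfinal : 2*A^(q-1) ≤ 2^q + 2^q*s^q := by nlinarith [hstep]
    calc 2*(1+t^p)^(q-1) = (2*A^(q-1))/(1+s)^q := by rw [e5]; ring
    _ ≤ (2^q + 2^q*s^q)/(1+s)^q := by gcongr
    _ = (1+t)^q + (1-t)^q := by rw [e6, e7]; ring

lemma main {p q : ℝ} (hp : 2 ≤ p) (hq : q = p/(p-1)) {a b : ℝ} (hb : 0 ≤ b) (hba : b ≤ a) :
    2*(a^p + b^p)^(q-1) ≤ (a+b)^q + (a-b)^q := by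
  have hp0 : 0 < p := by linarith
  have hp1 : 0 < p-1 := by linarith
  have hq1 : 1 < q := by rw [hq, lt_div_iff₀ hp1]; linarith
  have ha : 0 ≤ a := le_trans hb hba
  rcases eq_or_lt_of_le ha with h0 | ha0
  · have hb0 : b = 0 := le_antisymm (hba.trans h0.ge) hb
    rw [← h0, hb0]
    rw [Real.zero_rpow hp0.ne']
    norm_num
    rw [Real.zero_rpow (by linarith : q - 1 ≠ 0), Real.zero_rpow (by linarith : q ≠ 0)]
    norm_num
  · set t := b/a with ht_def
    have ht0 : 0 ≤ t := div_nonneg hb ha0.le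
    have ht1 : t ≤ 1 := by rw [ht_def, div_le_one ha0]; exact hba
    have hkey := key hp hq ht0 ht1
    have hab : b = a*t := by rw [ht_def]; field_simp
    have haq : 0 < a^q := Real.rpow_pos_of_pos ha0 q
    have eA : (a+b)^q = a^q * (1+t)^q := by
      rw [hab, show a + a*t = a*(1+t) by ring, Real.mul_rpow ha0.le (by linarith)]
    have eB : (a-b)^q = a^q * (1-t)^q := by
      rw [hab, show a - a*t = a*(1-t) by ring, Real.mul_rpow ha0.le (by linarith)]
    have eC : (a^p + b^p)^(q-1) = a^q * (1+t^p)^(q-1) := by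
      rw [hab, Real.mul_rpow ha0.le ht0,
        show a^p + a^p*t^p = a^p*(1+t^p) by ring,
        Real.mul_rpow (Real.rpow_nonneg ha0.le p) (by positivity),
        ← Real.rpow_mul ha0.le, show p*(q-1) = q by rw [hq]; field_simp; ring]
    rw [eA, eB, eC]
    calc 2*(a^q * (1+t^p)^(q-1)) = a^q * (2*(1+t^p)^(q-1)) := by ring
    _ ≤ a^q * ((1+t)^q + (1-t)^q) := mul_le_mul_of_nonneg_left hkey haq.le
    _ = a^q * (1+t)^q + a^q * (1-t)^q := by ring

lemma core {p q : ℝ} (hp : 2 ≤ p) (hq : q = p/(p-1)) (x y : ℝ) (hxy : |y| ≤ |x|) :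
    |x + y| ^ q + |x - y| ^ q ≥ 2 * (|x| ^ p + |y| ^ p) ^ (q - 1) := by
  rcases le_total 0 x with hx | hx <;> rcases le_total 0 y with hy | hy
  · rw [abs_of_nonneg hx, abs_of_nonneg hy] at hxy ⊢
    have h := main hp hq hy hxy
    rw [abs_of_nonneg (by linarith : (0:ℝ) ≤ x + y), abs_of_nonneg (by linarith : (0:ℝ) ≤ x - y)]
    linarith
  · rw [abs_of_nonneg hx, abs_of_nonpos hy] at hxy ⊢
    have h := main hp hq (b := -y) (by linarith) hxy
    rw [abs_of_nonneg (by linarith : (0:ℝ) ≤ x + y), abs_of_nonneg (by linarith : (0:ℝ) ≤ x - y)]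
    rw [show x + -y = x - y by ring, show x - -y = x + y by ring] at h
    linarith
  · rw [abs_of_nonpos hx, abs_of_nonneg hy] at hxy ⊢
    have h := main hp hq (a := -x) hy hxy
    rw [abs_of_nonpos (by linarith : x + y ≤ 0), abs_of_nonpos (by linarith : x - y ≤ 0)]
    rw [show -x + y = -(x - y) by ring, show -x - y = -(x + y) by ring] at h
    linarith
  · rw [abs_of_nonpos hx, abs_of_nonpos hy] at hxy ⊢
    have h := main hp hq (a := -x) (b := -y) (by linarith) hxy
    rw [abs_of_nonpos (by linarith : x + y ≤ 0), abs_of_nonpos (by linarith : x - y ≤ 0)]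
    rw [show -x + -y = -(x + y) by ring, show -x - -y = -(x - y) by ring] at h
    linarith


end Clarkson

theorem stmt14 (p q : ℝ) (hp : 2 ≤ p) (hq : q = p / (p - 1)) (x y : ℝ) :
    |x + y| ^ q + |x - y| ^ q ≥ 2 * (|x| ^ p + |y| ^ p) ^ (q - 1) := by
  rcases le_total |y| |x| with hxy | hxy
  · exact Clarkson.core hp hq x y hxy
  · have h := Clarkson.core hp hq y x hxy
    rw [abs_sub_comm y x, show y + x = x + y by ring, add_comm (|y|^p)] at h
    exact h
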